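/- Let C ∈ ℂ^{n×n} be a nonzero positive semidefinite matrix. For indices (i,j), let L_{ij} = [C e_i, C e_j] ∈ ℂ^{n×2}, let B_{ij} be the 2×2 submatrix with entries C_{ii}, C_{ij}, C_{ji}, C_{jj}, and let K_{ij} = L_{ij} B_{ij}^† L_{ij}* (with B_{ij}^† the Moore–Penrose pseudoinverse). Then the expected one-step residuals satisfy: Σ_{i,j} (|C_{ij}|²/‖C‖_F²) · tr( C − K_{ij} ) ≤ Σ_{i: C_{ii} ≠ 0} (C_{ii}/tr(C)) · tr( C − (1/C_{ii})·C e_i e_i^T C ). Equivalently, the expected trace of the residual of one symmetric rank-2 randomly pivoted LU step is at most the expected trace of the residual of one randomly pivoted Cholesky step. -/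

import Mathlib

open Matrix Finset
open scoped ComplexOrder
open scoped MatrixOrder

/-- Squared Frobenius norm of a complex matrix. -/
noncomputable def frobSq {n m : ℕ} (A : Matrix (Fin n) (Fin m) ℂ) : ℝ :=
  ∑ i, ∑ j, ‖A i j‖ ^ 2

/-- The Moore–Penrose pseudoinverse of a square complex matrix, characterized by the four
Penrose equations (which always have a unique solution). -/
noncomputable def moorePenrose {p : ℕ} (B : Matrix (Fin p) (Fin p) ℂ) :
    Matrix (Fin p) (Fin p) ℂ :=
  open scoped Classical in
  if h : ∃ X : Matrix (Fin p) (Fin p) ℂ,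
      B * X * B = B ∧ X * B * X = X ∧ (B * X)ᴴ = B * X ∧ (X * B)ᴴ = X * B
  then h.choose else 0

/-- The symmetric rank-2 correction `K_{ij} = L_{ij} B_{ij}† L_{ij}ᴴ` of SRPLU, where
`L_{ij} = [C e_i, C e_j] ∈ ℂ^{n×2}` and `B_{ij} = C(\{i,j\},\{i,j\}) ∈ ℂ^{2×2}`. -/
noncomputable def srpluK {n : ℕ} (C : Matrix (Fin n) (Fin n) ℂ) (i j : Fin n) :
    Matrix (Fin n) (Fin n) ℂ :=
  (C.submatrix id ![i, j]) * moorePenrose (C.submatrix ![i, j] ![i, j]) *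
    (C.submatrix id ![i, j])ᴴ

/-- Penrose conditions. -/
def IsPenrose {p : ℕ} (B X : Matrix (Fin p) (Fin p) ℂ) : Prop :=
  B * X * B = B ∧ X * B * X = X ∧ (B * X)ᴴ = B * X ∧ (X * B)ᴴ = X * B

lemma IsPenrose.unique {p : ℕ} {B X Y : Matrix (Fin p) (Fin p) ℂ}
    (hX : IsPenrose B X) (hY : IsPenrose B Y) : X = Y := by
  obtain ⟨hX1, hX2, hX3, hX4⟩ := hX
  obtain ⟨hY1, hY2, hY3, hY4⟩ := hY
  have hX3' : Xᴴ * Bᴴ = B * X := by rw [← conjTranspose_mul, hX3]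
  have hX4' : Bᴴ * Xᴴ = X * B := by rw [← conjTranspose_mul, hX4]
  have hY3' : Yᴴ * Bᴴ = B * Y := by rw [← conjTranspose_mul, hY3]
  have hY4' : Bᴴ * Yᴴ = Y * B := by rw [← conjTranspose_mul, hY4]
  have hBH1 : Bᴴ = Bᴴ * Yᴴ * Bᴴ := by
    conv_lhs => rw [show Bᴴ = (B * Y * B)ᴴ by rw [hY1], conjTranspose_mul, conjTranspose_mul]
    noncomm_ring
  have hBH2 : Bᴴ = Bᴴ * Xᴴ * Bᴴ := by
    conv_lhs => rw [show Bᴴ = (B * X * B)ᴴ by rw [hX1], conjTranspose_mul, conjTranspose_mul]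
    noncomm_ring
  have e1 : X = X * B * Y := by
    conv_lhs => rw [← hX2]
    rw [mul_assoc, ← hX3', hBH1]
    rw [show X * (Xᴴ * (Bᴴ * Yᴴ * Bᴴ)) = X * ((Xᴴ * Bᴴ) * (Yᴴ * Bᴴ)) by noncomm_ring]
    rw [hX3', hY3']
    rw [show X * (B * X * (B * Y)) = (X * B * X) * (B * Y) by noncomm_ring, hX2, ← mul_assoc]
  have e2 : Y = X * B * Y := by
    conv_lhs => rw [← hY2]
    rw [show Y * B * Y = (Bᴴ * Yᴴ) * Y by rw [hY4'], hBH2]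
    rw [show Bᴴ * Xᴴ * Bᴴ * Yᴴ * Y = (Bᴴ * Xᴴ) * ((Bᴴ * Yᴴ) * Y) by noncomm_ring]
    rw [hX4', hY4']
    rw [show X * B * (Y * B * Y) = X * B * Y * B * Y by noncomm_ring]
    rw [show X * B * Y * B * Y = X * B * (Y * B * Y) by noncomm_ring, hY2]
  rw [e1, ← e2]

lemma moorePenrose_eq {p : ℕ} {B X : Matrix (Fin p) (Fin p) ℂ} (h : IsPenrose B X) :
    moorePenrose B = X := by
  rw [moorePenrose]
  have hex : ∃ X : Matrix (Fin p) (Fin p) ℂ,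
      B * X * B = B ∧ X * B * X = X ∧ (B * X)ᴴ = B * X ∧ (X * B)ᴴ = X * B := ⟨X, h⟩
  rw [dif_pos hex]
  exact IsPenrose.unique hex.choose_spec h

section PsdFacts
variable {n : ℕ} {C : Matrix (Fin n) (Fin n) ℂ}

lemma psd_diag_nonneg (hC : C.PosSemidef) (i : Fin n) : 0 ≤ C i i := by
  exact hC.diag_nonneg

lemma psd_diag_re (hC : C.PosSemidef) (i : Fin n) : ((C i i).re : ℂ) = C i i := by
  have h := psd_diag_nonneg hC i
  rw [Complex.nonneg_iff] at h
  apply Complex.ext <;> simp [h.2]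

lemma psd_diag_re_nonneg (hC : C.PosSemidef) (i : Fin n) : 0 ≤ (C i i).re := by
  have h := psd_diag_nonneg hC i
  rw [Complex.nonneg_iff] at h
  exact h.1

lemma psd_sqrt_col_eq_zero (hC : C.PosSemidef) {i : Fin n} (h : C i i = 0) (t : Fin n) :
    CFC.sqrt C t i = 0 := by
  set A := CFC.sqrt C with hAdef
  have hA : A * A = C := CFC.sqrt_mul_sqrt_self C hC.nonneg
  have hAH : Aᴴ = A := (CFC.sqrt_nonneg C).posSemidef.isHermitian
  have hconj : ∀ s t : Fin n, A s t = (starRingEnd ℂ) (A t s) := by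
    intro s t
    conv_lhs => rw [← hAH]
    rfl
  have hsum : ∑ s, Complex.normSq (A s i) = 0 := by
    have h1 : C i i = ∑ s, (Complex.normSq (A s i) : ℂ) := by
      rw [← hA, Matrix.mul_apply]
      refine Finset.sum_congr rfl fun s _ => ?_
      rw [hconj i s, Complex.normSq_eq_conj_mul_self]
    rw [h] at h1
    have := congrArg Complex.re h1
    simpa using this.symm
  have := (Finset.sum_eq_zero_iff_of_nonneg
    (fun s _ => Complex.normSq_nonneg (A s i))).mp hsum t (Finset.mem_univ t)
  exact Complex.normSq_eq_zero.mp this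

lemma psd_col_eq_zero (hC : C.PosSemidef) {i : Fin n} (h : C i i = 0) (j : Fin n) :
    C j i = 0 := by
  rw [← CFC.sqrt_mul_sqrt_self C hC.nonneg, Matrix.mul_apply]
  exact Finset.sum_eq_zero fun t _ => by rw [psd_sqrt_col_eq_zero hC h t, mul_zero]

lemma psd_row_eq_zero (hC : C.PosSemidef) {i : Fin n} (h : C i i = 0) (j : Fin n) :
    C i j = 0 := by
  have : C i j = (starRingEnd ℂ) (C j i) := by exact (hC.isHermitian.apply i j).symm
  rw [this, psd_col_eq_zero hC h j, map_zero]

end PsdFacts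

section TwoByTwo

lemma sq_fin_two (B : Matrix (Fin 2) (Fin 2) ℂ) :
    B * B = B.trace • B - B.det • (1 : Matrix (Fin 2) (Fin 2) ℂ) := by
  ext i j
  fin_cases i <;> fin_cases j <;>
    simp [Matrix.mul_apply, Fin.sum_univ_two, Matrix.trace_fin_two, Matrix.det_fin_two,
      Matrix.one_apply] <;> ring

lemma isPenrose_moorePenrose_of_psd2 {B : Matrix (Fin 2) (Fin 2) ℂ} (hB : B.PosSemidef) :
    IsPenrose B (moorePenrose B) := by
  suffices h : ∃ X, IsPenrose B X by
    obtain ⟨X, hX⟩ := h; rw [moorePenrose_eq hX]; exact hX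
  have hH : Bᴴ = B := hB.isHermitian
  by_cases hdet : IsUnit B.det
  · refine ⟨B⁻¹, ?_, ?_, ?_, ?_⟩
    · rw [Matrix.mul_nonsing_inv B hdet, one_mul]
    · rw [Matrix.nonsing_inv_mul B hdet, one_mul]
    · rw [Matrix.mul_nonsing_inv B hdet, Matrix.conjTranspose_one]
    · rw [Matrix.nonsing_inv_mul B hdet, Matrix.conjTranspose_one]
  · have hd0 : B.det = 0 := by
      by_contra h0; exact hdet (isUnit_iff_ne_zero.mpr h0)
    by_cases htr : B.trace = 0
    · have h00 : B 0 0 = 0 ∧ B 1 1 = 0 := by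
        have hsum : B 0 0 + B 1 1 = 0 := by rw [← Matrix.trace_fin_two, htr]
        have h0 := psd_diag_nonneg hB 0
        have h1 := psd_diag_nonneg hB 1
        constructor
        · exact le_antisymm (by calc B 0 0 = -(B 1 1) := by linear_combination hsum
                                  _ ≤ 0 := neg_nonpos_of_nonneg h1) h0
        · exact le_antisymm (by calc B 1 1 = -(B 0 0) := by linear_combination hsum
                                  _ ≤ 0 := neg_nonpos_of_nonneg h0) h1
      have hB0 : B = 0 := by
        ext i j
        fin_cases i <;> fin_cases j <;>
          simp [h00.1, h00.2, psd_row_eq_zero hB h00.1, psd_row_eq_zero hB h00.2,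
            psd_col_eq_zero hB h00.1, psd_col_eq_zero hB h00.2]
      exact ⟨0, by simp [IsPenrose, hB0]⟩
    · set t := B.trace with ht
      have htconj : star t = t := by
        rw [ht, Matrix.trace_fin_two]
        rw [← psd_diag_re hB 0, ← psd_diag_re hB 1]
        simp
      have hsq : B * B = t • B := by rw [sq_fin_two, hd0, zero_smul, sub_zero]
      refine ⟨(t ^ 2)⁻¹ • B, ?_⟩
      have e3 : B * ((t ^ 2)⁻¹ • B) = t⁻¹ • B := by
        rw [Matrix.mul_smul, hsq, smul_smul]
        congr 1
        field_simp
      have e3' : ((t ^ 2)⁻¹ • B) * B = t⁻¹ • B := by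
        rw [Matrix.smul_mul, hsq, smul_smul]
        congr 1
        field_simp
      refine ⟨?_, ?_, ?_, ?_⟩
      · rw [e3, Matrix.smul_mul, hsq, smul_smul, inv_mul_cancel₀ htr, one_smul]
      · rw [e3', Matrix.smul_mul, Matrix.mul_smul, hsq, smul_smul, smul_smul]
        congr 1
        field_simp
      · rw [e3, Matrix.conjTranspose_smul, hH, star_inv₀, htconj]
      · rw [e3', Matrix.conjTranspose_smul, hH, star_inv₀, htconj]

end TwoByTwo

section Key
variable {n : ℕ}

lemma psd_trace_re_nonneg {M : Matrix (Fin n) (Fin n) ℂ} (h : M.PosSemidef) :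
    0 ≤ M.trace.re := by
  have h1 : M.trace.re = ∑ k, (M k k).re := by
    rw [Matrix.trace]
    simp [Matrix.diag, Complex.re_sum]
  rw [h1]
  exact Finset.sum_nonneg fun k _ => psd_diag_re_nonneg h k

lemma key_trace_ineq (C : Matrix (Fin n) (Fin n) ℂ) (hC : C.PosSemidef)
    (i j : Fin n) (hii : C i i ≠ 0) :
    (Matrix.trace (C - srpluK C i j)).re ≤
      (Matrix.trace (C - (C i i)⁻¹ • (C * Matrix.single i i (1 : ℂ) * C))).re := by
  set c : ℂ := C i i with hc
  have hcre : star c = c := by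
    rw [hc, ← psd_diag_re hC i]; simp
  obtain ⟨A, hA2, hAH⟩ : ∃ A : Matrix (Fin n) (Fin n) ℂ, A * A = C ∧ Aᴴ = A :=
    ⟨CFC.sqrt C, CFC.sqrt_mul_sqrt_self C hC.nonneg, (CFC.sqrt_nonneg C).posSemidef.isHermitian⟩
  have hconjA : ∀ s t : Fin n, A s t = star (A t s) := by
    intro s t
    conv_lhs => rw [← hAH]
    rw [Matrix.conjTranspose_apply]
  set M : Matrix (Fin n) (Fin 2) ℂ := A.submatrix id ![i, j] with hMdef
  have hL : C.submatrix id ![i, j] = A * M := by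
    ext k a
    rw [Matrix.submatrix_apply, ← hA2]
    simp [hMdef, Matrix.mul_apply]
  have hBsub : C.submatrix ![i, j] ![i, j] = Mᴴ * M := by
    ext a b
    rw [Matrix.submatrix_apply, ← hA2]
    simp only [Matrix.mul_apply, Matrix.conjTranspose_apply, hMdef,
      Matrix.submatrix_apply, id_eq]
    exact Finset.sum_congr rfl fun t _ => by rw [hconjA (![i,j] a) t]
  have hBpsd : (Mᴴ * M).PosSemidef := Matrix.posSemidef_conjTranspose_mul_self M
  obtain ⟨X, hXeq⟩ : ∃ X, moorePenrose (Mᴴ * M) = X := ⟨_, rfl⟩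
  obtain ⟨hP1, hP2, hP3, hP4⟩ := isPenrose_moorePenrose_of_psd2 hBpsd
  rw [hXeq] at hP1 hP2 hP3 hP4
  have hXH : Xᴴ = X := by
    have q1 : (Mᴴ * M) * Xᴴ * (Mᴴ * M) = Mᴴ * M := by
      have h := congrArg Matrix.conjTranspose hP1
      simp only [Matrix.conjTranspose_mul, Matrix.conjTranspose_conjTranspose,
        Matrix.mul_assoc] at h ⊢
      exact h
    have q2 : Xᴴ * (Mᴴ * M) * Xᴴ = Xᴴ := by
      have h := congrArg Matrix.conjTranspose hP2
      simp only [Matrix.conjTranspose_mul, Matrix.conjTranspose_conjTranspose,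
        Matrix.mul_assoc] at h ⊢
      exact h
    have q3 : ((Mᴴ * M) * Xᴴ)ᴴ = (Mᴴ * M) * Xᴴ := by
      have h := hP4
      simp only [Matrix.conjTranspose_mul, Matrix.conjTranspose_conjTranspose,
        Matrix.mul_assoc] at h ⊢
      exact h.symm
    have q4 : (Xᴴ * (Mᴴ * M))ᴴ = Xᴴ * (Mᴴ * M) := by
      have h := hP3
      simp only [Matrix.conjTranspose_mul, Matrix.conjTranspose_conjTranspose,
        Matrix.mul_assoc] at h ⊢
      exact h.symm
    exact IsPenrose.unique ⟨q1, q2, q3, q4⟩ ⟨hP1, hP2, hP3, hP4⟩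
  have hMXB : M * X * (Mᴴ * M) = M := by
    have e1 : (M * X * (Mᴴ * M) - M)ᴴ = (Mᴴ * M) * X * Mᴴ - Mᴴ := by
      simp only [Matrix.conjTranspose_sub, Matrix.conjTranspose_mul,
        Matrix.conjTranspose_conjTranspose, hXH, Matrix.mul_assoc]
    have t11 : (Mᴴ * M) * X * Mᴴ * (M * X * (Mᴴ * M)) = Mᴴ * M := by
      rw [show (Mᴴ * M) * X * Mᴴ * (M * X * (Mᴴ * M))
          = (Mᴴ * M) * (X * (Mᴴ * M) * X) * (Mᴴ * M) by simp only [Matrix.mul_assoc], hP2]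
      exact hP1
    have t12 : (Mᴴ * M) * X * Mᴴ * M = Mᴴ * M := by
      rw [show (Mᴴ * M) * X * Mᴴ * M = Mᴴ * M * X * (Mᴴ * M) by
        simp only [Matrix.mul_assoc], hP1]
    have t21 : Mᴴ * (M * X * (Mᴴ * M)) = Mᴴ * M := by
      rw [show Mᴴ * (M * X * (Mᴴ * M)) = Mᴴ * M * X * (Mᴴ * M) by
        simp only [Matrix.mul_assoc], hP1]
    have hzero : (M * X * (Mᴴ * M) - M)ᴴ * (M * X * (Mᴴ * M) - M) = 0 := by
      rw [e1, Matrix.sub_mul, Matrix.mul_sub, Matrix.mul_sub, t11, t12, t21]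
      simp
    exact sub_eq_zero.mp (Matrix.conjTranspose_mul_self_eq_zero.mp hzero)
  set E : Matrix (Fin 2) (Fin 2) ℂ := Matrix.single 0 0 1 with hEdef
  have hB00 : (Mᴴ * M) 0 0 = c := by
    rw [← hBsub, Matrix.submatrix_apply]
    simp [hc]
  have hEH : Eᴴ = E := by
    ext a b; fin_cases a <;> fin_cases b <;> simp [hEdef, Matrix.single]
  have hEBE : E * (Mᴴ * M) * E = c • E := by
    have gen : ∀ B : Matrix (Fin 2) (Fin 2) ℂ, E * B * E = (B 0 0) • E := by
      intro B
      ext a b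
      fin_cases a <;> fin_cases b <;>
        simp [hEdef, Matrix.mul_apply, Fin.sum_univ_two, Matrix.single, mul_comm]
    rw [gen (Mᴴ * M), hB00]
  set P : Matrix (Fin n) (Fin n) ℂ := M * X * Mᴴ with hPdef
  set P₁ : Matrix (Fin n) (Fin n) ℂ := c⁻¹ • (M * E * Mᴴ) with hP₁def
  have hPH : Pᴴ = P := by
    rw [hPdef]
    simp only [Matrix.conjTranspose_mul, Matrix.conjTranspose_conjTranspose, hXH,
      Matrix.mul_assoc]
  have hP₁H : P₁ᴴ = P₁ := by
    rw [hP₁def, Matrix.conjTranspose_smul]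
    simp only [Matrix.conjTranspose_mul, Matrix.conjTranspose_conjTranspose, hEH,
      star_inv₀, hcre, Matrix.mul_assoc]
  have hPP : P * P = P := by
    rw [hPdef]
    rw [show M * X * Mᴴ * (M * X * Mᴴ) = M * (X * (Mᴴ * M) * X) * Mᴴ by
      simp only [Matrix.mul_assoc], hP2]
  have hPP₁ : P * P₁ = P₁ := by
    rw [hPdef, hP₁def, Matrix.mul_smul]
    congr 1
    rw [show M * X * Mᴴ * (M * E * Mᴴ) = (M * X * (Mᴴ * M)) * (E * Mᴴ) by
      simp only [Matrix.mul_assoc], hMXB, ← Matrix.mul_assoc]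
  have hP₁P : P₁ * P = P₁ := by
    have h1 : (P * P₁)ᴴ = P₁ * P := by rw [Matrix.conjTranspose_mul, hPH, hP₁H]
    rw [← h1, hPP₁, hP₁H]
  have hP₁P₁ : P₁ * P₁ = P₁ := by
    rw [hP₁def, Matrix.smul_mul, Matrix.mul_smul, smul_smul]
    rw [show M * E * Mᴴ * (M * E * Mᴴ) = M * (E * (Mᴴ * M) * E) * Mᴴ by
      simp only [Matrix.mul_assoc], hEBE]
    rw [Matrix.mul_smul, Matrix.smul_mul, smul_smul]
    congr 1
    field_simp
  set Q : Matrix (Fin n) (Fin n) ℂ := P - P₁ with hQdef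
  have hQH : Qᴴ = Q := by rw [hQdef, Matrix.conjTranspose_sub, hPH, hP₁H]
  have hQQ : Qᴴ * Q = Q := by
    rw [hQH, hQdef, Matrix.sub_mul, Matrix.mul_sub, Matrix.mul_sub, hPP, hPP₁, hP₁P, hP₁P₁]
    simp
  have hQpsd : Q.PosSemidef := by
    rw [← hQQ]; exact Matrix.posSemidef_conjTranspose_mul_self Q
  have hAQA : (A * Q * Aᴴ).PosSemidef := hQpsd.mul_mul_conjTranspose_same A
  have hK : srpluK C i j = A * P * Aᴴ := by
    unfold srpluK
    rw [hBsub, hL, hXeq, hPdef]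
    simp only [Matrix.conjTranspose_mul, Matrix.mul_assoc]
  have hCEC : C * Matrix.single i i 1 * C = A * (M * E * Mᴴ) * Aᴴ := by
    have h1 : A * (M * E * Mᴴ) * Aᴴ = (A * M) * E * (A * M)ᴴ := by
      simp only [Matrix.conjTranspose_mul, Matrix.mul_assoc]
    rw [h1, ← hL]
    ext k l
    have lhs : (C * Matrix.single i i (1:ℂ) * C) k l = C k i * C i l := by
      rw [Matrix.mul_assoc, Matrix.mul_apply]
      rw [Finset.sum_eq_single i]
      · simp
      · intro b _ hb
        simp [hb]
      · intro h; exact absurd (Finset.mem_univ i) h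
    have rhs : ((C.submatrix id ![i, j]) * E * (C.submatrix id ![i, j])ᴴ) k l
        = C k i * C i l := by
      rw [Matrix.mul_assoc, Matrix.mul_apply, Fin.sum_univ_two, hEdef]
      rw [Matrix.single_mul_apply_same, Matrix.single_mul_apply_of_ne (h := by decide)]
      simp [Matrix.conjTranspose_apply, Matrix.mul_apply, Fin.sum_univ_two,
        Matrix.single_apply, (show (1 : Fin 2) ≠ 0 by decide)]
      exact Or.inl (hC.isHermitian.apply i l)
    rw [lhs, rhs]
  have hK₁ : c⁻¹ • (C * Matrix.single i i 1 * C) = A * P₁ * Aᴴ := by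
    rw [hCEC, hP₁def, Matrix.mul_smul, Matrix.smul_mul]
  have hsplit : A * Q * Aᴴ = A * P * Aᴴ - A * P₁ * Aᴴ := by
    rw [hQdef, Matrix.mul_sub, Matrix.sub_mul]
  have htr : 0 ≤ (Matrix.trace (A * P * Aᴴ) - Matrix.trace (A * P₁ * Aᴴ)).re := by
    rw [← Matrix.trace_sub, ← hsplit]
    exact psd_trace_re_nonneg hAQA
  rw [Matrix.trace_sub, Matrix.trace_sub, hK, hK₁]
  rw [Complex.sub_re, Complex.sub_re]
  rw [Complex.sub_re] at htr
  linarith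
end Key

section Main
variable {n : ℕ}

lemma CEC_apply (C : Matrix (Fin n) (Fin n) ℂ) (i k l : Fin n) :
    (C * Matrix.single i i (1:ℂ) * C) k l = C k i * C i l := by
  rw [Matrix.mul_assoc, Matrix.mul_apply]
  rw [Finset.sum_eq_single i]
  · simp
  · intro b _ hb
    simp [hb]
  · intro h; exact absurd (Finset.mem_univ i) h

theorem srplu_le_rpcholesky' (C : Matrix (Fin n) (Fin n) ℂ)
    (hC : C.PosSemidef) (hC0 : C ≠ 0) :
    (∑ i : Fin n, ∑ j : Fin n,
        (‖C i j‖ ^ 2 / frobSq C) * (Matrix.trace (C - srpluK C i j)).re)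
      ≤ ∑ i ∈ Finset.univ.filter (fun i : Fin n => C i i ≠ 0),
          ((C i i).re / (Matrix.trace C).re) *
            (Matrix.trace (C - (C i i)⁻¹ • (C * Matrix.single i i (1 : ℂ) * C))).re := by
  classical
  set T : ℝ := (Matrix.trace C).re with hT
  set S : Finset (Fin n) := Finset.univ.filter (fun i : Fin n => C i i ≠ 0) with hS
  set p : Fin n → ℝ := fun i => ∑ k, ‖C i k‖ ^ 2 with hp
  set a : Fin n → ℝ := fun i => (C i i).re with ha
  have hTsum : T = ∑ i, a i := by
    rw [hT, Matrix.trace, Complex.re_sum]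
    rfl
  have hpnn : ∀ i, 0 ≤ p i := fun i => Finset.sum_nonneg fun k _ => by positivity
  have hann : ∀ i, 0 ≤ a i := fun i => psd_diag_re_nonneg hC i
  have hdiag0 : ∀ i, a i = 0 → C i i = 0 := by
    intro i h0
    have h1 : (C i i).re = 0 := h0
    rw [← psd_diag_re hC i, h1]
    norm_num
  have hF : frobSq C = ∑ i, p i := rfl
  obtain ⟨k0, l0, hkl⟩ : ∃ k l, C k l ≠ 0 := by
    by_contra h; push_neg at h; exact hC0 (by ext k l; simpa using h k l)
  have hkk : C k0 k0 ≠ 0 := fun h => hkl (psd_row_eq_zero hC h l0)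
  have hFpos : 0 < frobSq C := by
    have h1 : ‖C k0 l0‖ ^ 2 ≤ p k0 :=
      Finset.single_le_sum (f := fun k => ‖C k0 k‖ ^ 2) (fun k _ => by positivity)
        (Finset.mem_univ l0)
    have h2 : p k0 ≤ frobSq C := by
      rw [hF]
      exact Finset.single_le_sum (fun i _ => hpnn i) (Finset.mem_univ k0)
    have h3 : (0:ℝ) < ‖C k0 l0‖ ^ 2 := pow_pos (norm_pos_iff.mpr hkl) 2
    linarith
  have hTpos : 0 < T := by
    have h1 : a k0 ≤ T := hTsum ▸ Finset.single_le_sum (fun i _ => hann i) (Finset.mem_univ k0)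
    have h2 : 0 < a k0 := lt_of_le_of_ne (hann k0) fun h => hkk (hdiag0 k0 h.symm)
    linarith
  have hapos : ∀ i ∈ S, 0 < a i := by
    intro i hi
    rw [hS, Finset.mem_filter] at hi
    exact lt_of_le_of_ne (hann i) fun h => hi.2 (hdiag0 i h.symm)
  have hprow : ∀ i, C i i = 0 → p i = 0 := fun i h =>
    Finset.sum_eq_zero fun k _ => by rw [psd_row_eq_zero hC h k]; simp
  have htrCEC : ∀ i : Fin n,
      Matrix.trace (C * Matrix.single i i (1:ℂ) * C) = ((p i : ℝ) : ℂ) := by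
    intro i
    rw [Matrix.trace, hp, Complex.ofReal_sum]
    refine Finset.sum_congr rfl fun k _ => ?_
    rw [Matrix.diag_apply, CEC_apply, ← hC.isHermitian.apply k i, Complex.star_def,
      ← Complex.normSq_eq_conj_mul_self]
    norm_cast
    simp [Complex.normSq_eq_norm_sq]
  have hterm : ∀ i, C i i ≠ 0 →
      (Matrix.trace (C - (C i i)⁻¹ • (C * Matrix.single i i (1:ℂ) * C))).re
        = T - p i / a i := by
    intro i hi
    rw [Matrix.trace_sub, Matrix.trace_smul, htrCEC i]
    have hCii : C i i = ((a i : ℝ) : ℂ) := (psd_diag_re hC i).symm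
    rw [hCii, Complex.sub_re, smul_eq_mul, ← Complex.ofReal_inv, ← Complex.ofReal_mul,
      Complex.ofReal_re, inv_mul_eq_div]
  have hstep : ∀ i j : Fin n,
      (‖C i j‖ ^ 2 / frobSq C) * (Matrix.trace (C - srpluK C i j)).re
        ≤ (‖C i j‖ ^ 2 / frobSq C) * (T - p i / a i) := by
    intro i j
    by_cases hij : C i j = 0
    · simp [hij]
    · have hii : C i i ≠ 0 := fun h => hij (psd_row_eq_zero hC h j)
      have h1 := key_trace_ineq C hC i j hii
      rw [hterm i hii] at h1
      exact mul_le_mul_of_nonneg_left h1 (div_nonneg (by positivity) hFpos.le)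
  have haT : ∑ i ∈ S, a i = T := by
    rw [hTsum, hS]
    refine Finset.sum_filter_of_ne fun i _ h0 hcc => h0 ?_
    show (C i i).re = 0
    rw [hcc]
    norm_num
  have hpF : ∑ i ∈ S, p i = frobSq C := by
    rw [hF, hS]
    refine Finset.sum_filter_of_ne fun i _ h0 hcc => h0 (hprow i hcc)
  have hcs : (frobSq C) ^ 2 / T ≤ ∑ i ∈ S, (p i) ^ 2 / a i := by
    rw [← hpF, ← haT]
    exact Finset.sq_sum_div_le_sum_sq_div S p hapos
  set G : ℝ := ∑ i ∈ S, (p i) ^ 2 / a i with hG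
  have hdiff : ∑ i ∈ S, ((a i / T) * (T - p i / a i) - (p i / frobSq C) * (T - p i / a i))
      = G / frobSq C - frobSq C / T := by
    have expand : ∀ i ∈ S, (a i / T) * (T - p i / a i) - (p i / frobSq C) * (T - p i / a i)
        = (a i - p i / T) - (p i * T / frobSq C - (p i ^ 2 / a i) / frobSq C) := by
      intro i hi
      have hai := (hapos i hi).ne'
      field_simp
    rw [Finset.sum_congr rfl expand, Finset.sum_sub_distrib, Finset.sum_sub_distrib,
      Finset.sum_sub_distrib, ← Finset.sum_div, ← Finset.sum_div, ← Finset.sum_div,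
      ← Finset.sum_mul, haT, hpF, ← hG]
    field_simp
    ring
  have hfinal : ∑ i ∈ S, (p i / frobSq C) * (T - p i / a i)
      ≤ ∑ i ∈ S, (a i / T) * (T - p i / a i) := by
    have h1 : 0 ≤ G / frobSq C - frobSq C / T := by
      have h2 : frobSq C / T ≤ G / frobSq C := by
        have h3 : (frobSq C ^ 2 / T) / frobSq C ≤ G / frobSq C :=
          div_le_div_of_nonneg_right hcs hFpos.le
        calc frobSq C / T = (frobSq C ^ 2 / T) / frobSq C := by field_simp
        _ ≤ G / frobSq C := h3
      linarith
    have h4 := hdiff ▸ h1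
    rw [Finset.sum_sub_distrib] at h4
    linarith
  calc (∑ i : Fin n, ∑ j : Fin n,
        (‖C i j‖ ^ 2 / frobSq C) * (Matrix.trace (C - srpluK C i j)).re)
      ≤ ∑ i : Fin n, ∑ j : Fin n, (‖C i j‖ ^ 2 / frobSq C) * (T - p i / a i) :=
        Finset.sum_le_sum fun i _ => Finset.sum_le_sum fun j _ => hstep i j
    _ = ∑ i : Fin n, (p i / frobSq C) * (T - p i / a i) := by
        refine Finset.sum_congr rfl fun i _ => ?_
        rw [← Finset.sum_mul, ← Finset.sum_div]
    _ = ∑ i ∈ S, (p i / frobSq C) * (T - p i / a i) := by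
        rw [hS]
        refine (Finset.sum_filter_of_ne fun i _ h0 => ?_).symm
        intro hcc
        exact h0 (by rw [hprow i hcc]; simp)
    _ ≤ ∑ i ∈ S, (a i / T) * (T - p i / a i) := hfinal
    _ = ∑ i ∈ S, ((C i i).re / (Matrix.trace C).re) *
          (Matrix.trace (C - (C i i)⁻¹ • (C * Matrix.single i i (1 : ℂ) * C))).re := by
        refine Finset.sum_congr rfl fun i hi => ?_
        rw [hS, Finset.mem_filter] at hi
        rw [hterm i hi.2]
end Main


/-- **Theorem (one-step SRPLU beats one-step RPCholesky in expectation).**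
For a nonzero PSD matrix `C ∈ ℂ^{n×n}`,
`∑_{i,j} (|C_{ij}|²/‖C‖_F²) tr(C − K_{ij})
  ≤ ∑_{i : C_{ii} ≠ 0} (C_{ii}/tr C) tr(C − C_{ii}⁻¹ C e_i e_iᵀ C)`. -/
theorem srplu_le_rpcholesky {n : ℕ} (C : Matrix (Fin n) (Fin n) ℂ)
    (hC : C.PosSemidef) (hC0 : C ≠ 0) :
    (∑ i : Fin n, ∑ j : Fin n,
        (‖C i j‖ ^ 2 / frobSq C) * (Matrix.trace (C - srpluK C i j)).re)
      ≤ ∑ i ∈ Finset.univ.filter (fun i : Fin n => C i i ≠ 0),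
          ((C i i).re / (Matrix.trace C).re) *
            (Matrix.trace (C - (C i i)⁻¹ • (C * Matrix.single i i (1 : ℂ) * C))).re :=
  srplu_le_rpcholesky' C hC hC0
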